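/- Let V ⊆ (ℤ/2)^{2n} be a subgroup generated by 2c symplectic-pair generators and r ≥ 1 isotropic generators satisfying the standard commutation relations, all independent, where exactly one isotropic generator has odd weight and all other generators (symplectic and isotropic) have even weight. Then the number of elements of V of even weight equals the number of elements of odd weight, both equal to 2^{2c+r-1}. -/

import Mathlib

open Finset

/-- An `n`-qubit Pauli operator modulo phase, identified with `(u, v) ∈ (ℤ/2)ⁿ × (ℤ/2)ⁿ`
(corresponding to `Z^u X^v`). -/
abbrev Pauli (n : ℕ) := (Fin n → ZMod 2) × (Fin n → ZMod 2)

/-- The weight of a Pauli operator: the number of qubits on which it acts nontrivially. -/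
def wtP {n : ℕ} (g : Pauli n) : ℕ :=
  (Finset.univ.filter fun i => g.1 i ≠ 0 ∨ g.2 i ≠ 0).card

/-- The symplectic inner product of two Pauli operators. -/
def sip {n : ℕ} (g h : Pauli n) : ZMod 2 :=
  ∑ i, (g.1 i * h.2 i + g.2 i * h.1 i)

lemma sip_comm {n : ℕ} (a b : Pauli n) : sip a b = sip b a := by
  unfold sip; congr 1; ext i; ring

lemma sip_add_right {n : ℕ} (a x y : Pauli n) : sip a (x + y) = sip a x + sip a y := by
  unfold sip
  rw [← Finset.sum_add_distrib]
  congr 1; ext i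
  simp [Prod.fst_add, Prod.snd_add, Pi.add_apply]; ring

lemma sip_zero_right {n : ℕ} (a : Pauli n) : sip a 0 = 0 := by
  unfold sip; simp

lemma pauli_add_self {n : ℕ} (x : Pauli n) : x + x = 0 := by
  have h2 : ∀ a : ZMod 2, a + a = 0 := by decide
  ext i <;> simp [Prod.fst_add, Prod.snd_add, Pi.add_apply, h2]

lemma sip_neg_right {n : ℕ} (a x : Pauli n) : sip a (-x) = sip a x := by
  rw [neg_eq_of_add_eq_zero_right (pauli_add_self x)]

lemma wt_cast {n : ℕ} (x : Pauli n) :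
    (wtP x : ZMod 2) = ∑ i, (if x.1 i ≠ 0 ∨ x.2 i ≠ 0 then (1 : ZMod 2) else 0) := by
  unfold wtP
  rw [Finset.card_filter]
  push_cast
  rfl

lemma wt_add {n : ℕ} (x y : Pauli n) :
    ((wtP (x + y) : ZMod 2)) = (wtP x : ZMod 2) + (wtP y : ZMod 2) + sip x y := by
  rw [wt_cast, wt_cast, wt_cast]
  unfold sip
  rw [← Finset.sum_add_distrib, ← Finset.sum_add_distrib]
  congr 1; ext i
  have key : ∀ a b cc d : ZMod 2,
      (if a + cc ≠ 0 ∨ b + d ≠ 0 then (1 : ZMod 2) else 0) =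
      (if a ≠ 0 ∨ b ≠ 0 then (1 : ZMod 2) else 0) +
      (if cc ≠ 0 ∨ d ≠ 0 then (1 : ZMod 2) else 0) + (a * d + b * cc) := by decide
  simpa [Prod.fst_add, Prod.snd_add, Pi.add_apply] using key (x.1 i) (x.2 i) (y.1 i) (y.2 i)

lemma even_iff_cast {m : ℕ} : Even m ↔ (m : ZMod 2) = 0 := by
  rw [ZMod.natCast_eq_zero_iff]; exact even_iff_two_dvd

/-- Type II: exactly one isotropic generator of odd weight, all other generators even. -/
theorem typeII_weight_count {n c r : ℕ} (hr : 1 ≤ r)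
    (g : Fin (c + r) → Pauli n) (h : Fin c → Pauli n)
    (hgg : ∀ i j, sip (g i) (g j) = 0)
    (hhh : ∀ i j, sip (h i) (h j) = 0)
    (hgh : ∀ (i : Fin (c + r)) (j : Fin c), sip (g i) (h j) = if (i : ℕ) = (j : ℕ) then 1 else 0)
    (hcard : Nat.card (AddSubgroup.closure (Set.range g ∪ Set.range h) : AddSubgroup (Pauli n))
      = 2 ^ (2 * c + r))
    (hodd : ∃ i₀ : Fin (c + r), c ≤ (i₀ : ℕ) ∧ ¬ Even (wtP (g i₀)) ∧
      ∀ i, i ≠ i₀ → Even (wtP (g i)))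
    (hheven : ∀ j, Even (wtP (h j))) :
    {x | x ∈ AddSubgroup.closure (Set.range g ∪ Set.range h) ∧ Even (wtP x)}.ncard
        = 2 ^ (2 * c + r - 1) ∧
    {x | x ∈ AddSubgroup.closure (Set.range g ∪ Set.range h) ∧ ¬ Even (wtP x)}.ncard
        = 2 ^ (2 * c + r - 1) := by
  classical
  obtain ⟨i₀, hi₀c, hi₀odd, -⟩ := hodd
  set V : AddSubgroup (Pauli n) := AddSubgroup.closure (Set.range g ∪ Set.range h) with hV
  set t : Pauli n := g i₀ with ht
  have htV : t ∈ V := AddSubgroup.subset_closure (Or.inl ⟨i₀, rfl⟩)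
  have hcomm : ∀ x ∈ V, sip t x = 0 := by
    intro x hx
    induction hx using AddSubgroup.closure_induction with
    | mem y hy =>
      rcases hy with ⟨i, rfl⟩ | ⟨j, rfl⟩
      · exact hgg i₀ i
      · rw [hgh i₀ j, if_neg]
        have := j.isLt
        omega
    | zero => exact sip_zero_right t
    | add x y hx hy ihx ihy => rw [sip_add_right, ihx, ihy, add_zero]
    | neg x hx ih => rw [sip_neg_right]; exact ih
  have ht1 : (wtP t : ZMod 2) = 1 := by
    rw [even_iff_cast] at hi₀odd
    revert hi₀odd
    generalize (wtP t : ZMod 2) = a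
    revert a; decide
  have hflip : ∀ x ∈ V, (wtP (x + t) : ZMod 2) = (wtP x : ZMod 2) + 1 := by
    intro x hx
    rw [wt_add, ht1, sip_comm, hcomm x hx, add_zero]
  set Se : Set (Pauli n) := {x | x ∈ V ∧ Even (wtP x)} with hSe
  set So : Set (Pauli n) := {x | x ∈ V ∧ ¬ Even (wtP x)} with hSo
  have himg : (fun x => x + t) '' Se = So := by
    ext y
    constructor
    · rintro ⟨x, ⟨hxV, hxe⟩, rfl⟩
      refine ⟨V.add_mem hxV htV, ?_⟩
      rw [even_iff_cast] at hxe ⊢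
      rw [hflip x hxV, hxe]
      decide
    · rintro ⟨hyV, hyo⟩
      refine ⟨y + t, ⟨V.add_mem hyV htV, ?_⟩, ?_⟩
      · rw [even_iff_cast] at hyo ⊢
        rw [hflip y hyV]
        revert hyo
        generalize (wtP y : ZMod 2) = a
        revert a; decide
      · simp only
        rw [add_assoc, pauli_add_self, add_zero]
  have hinj : Function.Injective (fun x : Pauli n => x + t) := fun a b hab => by
    simpa using congrArg (· + t) hab
  have hcard_eq : Se.ncard = So.ncard := by
    rw [← himg, Set.ncard_image_of_injective _ hinj]
  have hunion : Se ∪ So = (V : Set (Pauli n)) := by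
    ext x
    simp only [hSe, hSo, Set.mem_union, Set.mem_setOf_eq, SetLike.mem_coe]
    tauto
  have hdisj : Disjoint Se So := by
    rw [Set.disjoint_left]
    rintro x ⟨-, hxe⟩ ⟨-, hxo⟩
    exact hxo hxe
  have hsum : Se.ncard + So.ncard = 2 ^ (2 * c + r) := by
    rw [← Set.ncard_union_eq hdisj (Set.toFinite Se) (Set.toFinite So), hunion]
    exact (Nat.card_coe_set_eq _).symm.trans hcard
  have hp : 2 ^ (2 * c + r) = 2 * 2 ^ (2 * c + r - 1) := by
    rw [← pow_succ']
    congr 1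
    omega
  constructor <;> omega
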